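/- Let V₁ and V₂ be finite types, E₁ : Fin m₁ → Sym2 V₁ and E₂ : Fin m₂ → Sym2 V₂ multigraphs, and let G be the disjoint-union multigraph on V = V₁ ⊕ V₂ with m = m₁ + m₂ edges, whose edge map E : Fin (m₁ + m₂) → Sym2 (V₁ ⊕ V₂) sends the first m₁ indices e to Sym2.map Sum.inl (E₁ e) and the remaining m₂ indices e to Sym2.map Sum.inr (E₂ e). Then for every real number p, with q = 1 − p: ∑_{x=0}^{m} c_x^G · p^{m−x} · q^x = (∑_{x=0}^{m₁} c_x^{G₁} · p^{m₁−x} · q^x) · (∑_{x=0}^{m₂} c_x^{G₂} · p^{m₂−x} · q^x). -/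
import Mathlib


/-- `e` is a loop index at vertex `v`. -/
def IsLoopIdx {V : Type*} {m : ℕ} (E : Fin m → Sym2 V) (v : V) (e : Fin m) : Prop :=
  E e = Sym2.diag v

/-- `u` and `v` are connected in the multigraph `E` with the edge indices in `S` deleted. -/
def ConnectedMod {V : Type*} {m : ℕ} (E : Fin m → Sym2 V) (S : Finset (Fin m))
    (u v : V) : Prop :=
  Relation.EqvGen (fun a b => ∃ e : Fin m, e ∉ S ∧ E e = s(a, b)) u v

/-- `G − S` is decodable: every vertex is connected in `G − S` to a vertex with a loop
outside `S`. -/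
def DecodableMod {V : Type*} {m : ℕ} (E : Fin m → Sym2 V) (S : Finset (Fin m)) : Prop :=
  ∀ u : V, ∃ v : V, (∃ e : Fin m, e ∉ S ∧ IsLoopIdx E v e) ∧ ConnectedMod E S u v

def IsDecodable {V : Type*} {m : ℕ} (E : Fin m → Sym2 V) : Prop :=
  DecodableMod E ∅

/-- `c_x^G`: the number of `x`-element sets of edge indices whose deletion leaves a
decodable graph. -/
noncomputable def cG {V : Type*} {m : ℕ} (E : Fin m → Sym2 V) (x : ℕ) : ℕ :=
  Set.ncard {S : Finset (Fin m) | S.card = x ∧ DecodableMod E S}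

/-- `k_x^G = C(m,x) − c_x^G`. -/
noncomputable def kG {V : Type*} {m : ℕ} (E : Fin m → Sym2 V) (x : ℕ) : ℕ :=
  Nat.choose m x - cG E x

/-- `m(G)`: the minimum cardinality of a loop cut. -/
noncomputable def mCut {V : Type*} {m : ℕ} (E : Fin m → Sym2 V) : ℕ :=
  sInf {k : ℕ | ∃ S : Finset (Fin m), S.card = k ∧ ¬ DecodableMod E S}

/-- incidence degree of `v` (a loop at `v` counts once). -/
noncomputable def dI {V : Type*} {m : ℕ} (E : Fin m → Sym2 V) (v : V) : ℕ :=
  Set.ncard {e : Fin m | v ∈ E e}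

/-- `δ_I(G)`: the minimum incidence degree. -/
noncomputable def deltaI {V : Type*} {m : ℕ} (E : Fin m → Sym2 V) : ℕ :=
  sInf (Set.range (dI E))

/-- `L_G`: the number of loop indices. -/
noncomputable def LG {V : Type*} {m : ℕ} (E : Fin m → Sym2 V) : ℕ :=
  Set.ncard {e : Fin m | ∃ v : V, E e = Sym2.diag v}

/-- `δ_ℓ(v)`: the number of loop indices at `v`. -/
noncomputable def loopsAt {V : Type*} {m : ℕ} (E : Fin m → Sym2 V) (v : V) : ℕ :=
  Set.ncard {e : Fin m | E e = Sym2.diag v}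

/-- `Δ_ℓ(G)`: the maximum number of loops at a single vertex. -/
noncomputable def DeltaLoops {V : Type*} {m : ℕ} (E : Fin m → Sym2 V) : ℕ :=
  sSup (Set.range (loopsAt E))

/-- `κ_G`: the edge connectivity. -/
noncomputable def kappaG {V : Type*} {m : ℕ} (E : Fin m → Sym2 V) : ℕ :=
  sInf {k : ℕ | ∃ S : Finset (Fin m), S.card = k ∧ ∃ u v : V, ¬ ConnectedMod E S u v}


section AuxProof19

open Relation Finset

private lemma aux_fin_cases {m n : ℕ} (e : Fin (m + n)) :
    (∃ i : Fin m, e = Fin.castAdd n i) ∨ ∃ j : Fin n, e = Fin.natAdd m j := by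
  induction e using Fin.addCases with
  | left i => exact Or.inl ⟨i, rfl⟩
  | right j => exact Or.inr ⟨j, rfl⟩

private lemma aux_map_eq_mk {α β : Type*} (f : α → β) (z : Sym2 α) (a b : β)
    (h : Sym2.map f z = s(a, b)) : ∃ x y : α, z = s(x, y) ∧ a = f x ∧ b = f y := by
  induction z using Sym2.ind with
  | _ x y =>
    rw [Sym2.map_pair_eq, Sym2.eq_iff] at h
    rcases h with ⟨h1, h2⟩ | ⟨h1, h2⟩
    · exact ⟨x, y, rfl, h1.symm, h2.symm⟩
    · exact ⟨y, x, Sym2.eq_swap.symm, h2.symm, h1.symm⟩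

private lemma aux_eqvGen_map {α β : Type*} {r : α → α → Prop} {r' : β → β → Prop} (f : α → β)
    (h : ∀ a b, r a b → r' (f a) (f b)) {a b : α} (hab : EqvGen r a b) :
    EqvGen r' (f a) (f b) := by
  induction hab with
  | rel a b h' => exact EqvGen.rel _ _ (h a b h')
  | refl a => exact EqvGen.refl _
  | symm a b _ ih => exact EqvGen.symm _ _ ih
  | trans a b c _ _ ih1 ih2 => exact EqvGen.trans _ _ _ ih1 ih2

variable {V₁ V₂ : Type*} {m₁ m₂ : ℕ} (E₁ : Fin m₁ → Sym2 V₁) (E₂ : Fin m₂ → Sym2 V₂)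

private def auxE : Fin (m₁ + m₂) → Sym2 (V₁ ⊕ V₂) := fun e =>
  Fin.addCases (fun i : Fin m₁ => Sym2.map Sum.inl (E₁ i))
    (fun j : Fin m₂ => Sym2.map Sum.inr (E₂ j)) e

private def auxS1 (S : Finset (Fin (m₁ + m₂))) : Finset (Fin m₁) :=
  Finset.univ.filter fun i => Fin.castAdd m₂ i ∈ S

private def auxS2 (S : Finset (Fin (m₁ + m₂))) : Finset (Fin m₂) :=
  Finset.univ.filter fun j => Fin.natAdd m₁ j ∈ S

private lemma aux_conn_cases (S : Finset (Fin (m₁ + m₂))) {a b : V₁ ⊕ V₂}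
    (h : ConnectedMod (auxE E₁ E₂) S a b) :
    (∃ u v, a = Sum.inl u ∧ b = Sum.inl v ∧ ConnectedMod E₁ (auxS1 S) u v) ∨
    (∃ u v, a = Sum.inr u ∧ b = Sum.inr v ∧ ConnectedMod E₂ (auxS2 S) u v) := by
  induction h with
  | rel a b h' =>
    obtain ⟨e, heS, hee⟩ := h'
    rcases aux_fin_cases e with ⟨i, rfl⟩ | ⟨j, rfl⟩
    · have hee' : Sym2.map Sum.inl (E₁ i) = s(a, b) := by simpa [auxE] using hee
      obtain ⟨x, y, hxy, ha, hb⟩ := aux_map_eq_mk _ _ _ _ hee'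
      exact Or.inl ⟨x, y, ha, hb, EqvGen.rel _ _ ⟨i, by simpa [auxS1] using heS, hxy⟩⟩
    · have hee' : Sym2.map Sum.inr (E₂ j) = s(a, b) := by simpa [auxE] using hee
      obtain ⟨x, y, hxy, ha, hb⟩ := aux_map_eq_mk _ _ _ _ hee'
      exact Or.inr ⟨x, y, ha, hb, EqvGen.rel _ _ ⟨j, by simpa [auxS2] using heS, hxy⟩⟩
  | refl a =>
    rcases a with u | u
    · exact Or.inl ⟨u, u, rfl, rfl, EqvGen.refl u⟩
    · exact Or.inr ⟨u, u, rfl, rfl, EqvGen.refl u⟩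
  | symm a b _ ih =>
    rcases ih with ⟨u, v, ha, hb, hc⟩ | ⟨u, v, ha, hb, hc⟩
    · exact Or.inl ⟨v, u, hb, ha, EqvGen.symm _ _ hc⟩
    · exact Or.inr ⟨v, u, hb, ha, EqvGen.symm _ _ hc⟩
  | trans a b c _ _ ih1 ih2 =>
    rcases ih1 with ⟨u, v, ha, hb, hc⟩ | ⟨u, v, ha, hb, hc⟩ <;>
      rcases ih2 with ⟨u', v', hb', hc', hc2⟩ | ⟨u', v', hb', hc', hc2⟩ <;>
      rw [hb] at hb'
    · obtain rfl := Sum.inl.inj hb'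
      exact Or.inl ⟨u, v', ha, hc', EqvGen.trans _ _ _ hc hc2⟩
    · exact absurd hb' (by simp)
    · exact absurd hb' (by simp)
    · obtain rfl := Sum.inr.inj hb'
      exact Or.inr ⟨u, v', ha, hc', EqvGen.trans _ _ _ hc hc2⟩

private lemma aux_conn_inl (S : Finset (Fin (m₁ + m₂))) {u v : V₁}
    (h : ConnectedMod E₁ (auxS1 S) u v) :
    ConnectedMod (auxE E₁ E₂) S (Sum.inl u) (Sum.inl v) := by
  refine aux_eqvGen_map Sum.inl ?_ h
  rintro a b ⟨e, he, hee⟩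
  refine ⟨Fin.castAdd m₂ e, ?_, ?_⟩
  · simpa [auxS1] using he
  · simp [auxE, hee]

private lemma aux_conn_inr (S : Finset (Fin (m₁ + m₂))) {u v : V₂}
    (h : ConnectedMod E₂ (auxS2 S) u v) :
    ConnectedMod (auxE E₁ E₂) S (Sum.inr u) (Sum.inr v) := by
  refine aux_eqvGen_map Sum.inr ?_ h
  rintro a b ⟨e, he, hee⟩
  refine ⟨Fin.natAdd m₁ e, ?_, ?_⟩
  · simpa [auxS2] using he
  · simp [auxE, hee]

private lemma aux_loop_inl (S : Finset (Fin (m₁ + m₂))) (v : V₁) :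
    (∃ e, e ∉ S ∧ IsLoopIdx (auxE E₁ E₂) (Sum.inl v) e) ↔
    ∃ e, e ∉ auxS1 S ∧ IsLoopIdx E₁ v e := by
  constructor
  · rintro ⟨e, he, hl⟩
    rcases aux_fin_cases e with ⟨i, rfl⟩ | ⟨j, rfl⟩
    · have hl' : Sym2.map Sum.inl (E₁ i) = s((Sum.inl v : V₁ ⊕ V₂), Sum.inl v) := by
        simpa [auxE, IsLoopIdx, Sym2.diag] using hl
      obtain ⟨x, y, hxy, hx, hy⟩ := aux_map_eq_mk _ _ _ _ hl'
      simp only [Sum.inl.injEq] at hx hy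
      refine ⟨i, by simpa [auxS1] using he, ?_⟩
      rw [IsLoopIdx, hxy, ← hx, ← hy, Sym2.diag]
    · have hl' : Sym2.map Sum.inr (E₂ j) = s((Sum.inl v : V₁ ⊕ V₂), Sum.inl v) := by
        simpa [auxE, IsLoopIdx, Sym2.diag] using hl
      obtain ⟨x, y, hxy, hx, hy⟩ := aux_map_eq_mk _ _ _ _ hl'
      exact absurd hx (by simp)
  · rintro ⟨e, he, hl⟩
    refine ⟨Fin.castAdd m₂ e, by simpa [auxS1] using he, ?_⟩
    simp only [IsLoopIdx, Sym2.diag] at hl ⊢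
    simp [auxE, hl]

private lemma aux_loop_inr (S : Finset (Fin (m₁ + m₂))) (v : V₂) :
    (∃ e, e ∉ S ∧ IsLoopIdx (auxE E₁ E₂) (Sum.inr v) e) ↔
    ∃ e, e ∉ auxS2 S ∧ IsLoopIdx E₂ v e := by
  constructor
  · rintro ⟨e, he, hl⟩
    rcases aux_fin_cases e with ⟨i, rfl⟩ | ⟨j, rfl⟩
    · have hl' : Sym2.map Sum.inl (E₁ i) = s((Sum.inr v : V₁ ⊕ V₂), Sum.inr v) := by
        simpa [auxE, IsLoopIdx, Sym2.diag] using hl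
      obtain ⟨x, y, hxy, hx, hy⟩ := aux_map_eq_mk _ _ _ _ hl'
      exact absurd hx (by simp)
    · have hl' : Sym2.map Sum.inr (E₂ j) = s((Sum.inr v : V₁ ⊕ V₂), Sum.inr v) := by
        simpa [auxE, IsLoopIdx, Sym2.diag] using hl
      obtain ⟨x, y, hxy, hx, hy⟩ := aux_map_eq_mk _ _ _ _ hl'
      simp only [Sum.inr.injEq] at hx hy
      refine ⟨j, by simpa [auxS2] using he, ?_⟩
      rw [IsLoopIdx, hxy, ← hx, ← hy, Sym2.diag]
  · rintro ⟨e, he, hl⟩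
    refine ⟨Fin.natAdd m₁ e, by simpa [auxS2] using he, ?_⟩
    simp only [IsLoopIdx, Sym2.diag] at hl ⊢
    simp [auxE, hl]

private lemma aux_dec_iff (S : Finset (Fin (m₁ + m₂))) :
    DecodableMod (auxE E₁ E₂) S ↔
      DecodableMod E₁ (auxS1 S) ∧ DecodableMod E₂ (auxS2 S) := by
  constructor
  · intro h
    constructor
    · intro u
      obtain ⟨v, hloop, hconn⟩ := h (Sum.inl u)
      rcases aux_conn_cases E₁ E₂ S hconn with ⟨u', v', hu, hv, hc⟩ | ⟨u', v', hu, hv, hc⟩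
      · obtain rfl := Sum.inl.inj hu
        exact ⟨v', (aux_loop_inl E₁ E₂ S v').mp (hv ▸ hloop), hc⟩
      · exact absurd hu (by simp)
    · intro u
      obtain ⟨v, hloop, hconn⟩ := h (Sum.inr u)
      rcases aux_conn_cases E₁ E₂ S hconn with ⟨u', v', hu, hv, hc⟩ | ⟨u', v', hu, hv, hc⟩
      · exact absurd hu (by simp)
      · obtain rfl := Sum.inr.inj hu
        exact ⟨v', (aux_loop_inr E₁ E₂ S v').mp (hv ▸ hloop), hc⟩
  · rintro ⟨h1, h2⟩ (u | u)
    · obtain ⟨v, hloop, hconn⟩ := h1 u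
      exact ⟨Sum.inl v, (aux_loop_inl E₁ E₂ S v).mpr hloop, aux_conn_inl E₁ E₂ S hconn⟩
    · obtain ⟨v, hloop, hconn⟩ := h2 u
      exact ⟨Sum.inr v, (aux_loop_inr E₁ E₂ S v).mpr hloop, aux_conn_inr E₁ E₂ S hconn⟩

open scoped Classical in
private lemma aux_poly {V : Type*} {m : ℕ} (E : Fin m → Sym2 V) (p : ℝ) :
    ∑ x ∈ Finset.range (m + 1), (cG E x : ℝ) * p ^ (m - x) * (1 - p) ^ x =
    ∑ S : Finset (Fin m),
      if DecodableMod E S then p ^ (m - S.card) * (1 - p) ^ S.card else 0 := by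
  have hmap : ∀ S : Finset (Fin m), S ∈ Finset.univ →
      S.card ∈ Finset.range (m + 1) := by
    intro S _
    simp only [Finset.mem_range, Nat.lt_succ_iff]
    simpa using Finset.card_le_univ S
  rw [← Finset.sum_fiberwise_of_maps_to hmap]
  refine Finset.sum_congr rfl fun x _ => ?_
  have h1 : ∀ S ∈ Finset.univ.filter (fun S : Finset (Fin m) => S.card = x),
      (if DecodableMod E S then p ^ (m - S.card) * (1 - p) ^ S.card else 0) =
      (if DecodableMod E S then p ^ (m - x) * (1 - p) ^ x else 0) := by
    intro S hS
    rw [(Finset.mem_filter.mp hS).2]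
  rw [Finset.sum_congr rfl h1, ← Finset.sum_filter, Finset.filter_filter,
    Finset.sum_const, nsmul_eq_mul]
  have h2 : cG E x =
      (Finset.univ.filter fun S : Finset (Fin m) =>
        S.card = x ∧ DecodableMod E S).card := by
    rw [cG, Set.ncard_eq_toFinset_card']
    congr 1
    ext S
    simp
  rw [h2]
  ring

private lemma aux_prod_sum {α β : Type*} [Fintype α] [Fintype β] (f : α → ℝ) (g : β → ℝ) :
    (∑ a, f a) * (∑ b, g b) = ∑ ab : α × β, f ab.1 * g ab.2 := by
  rw [Fintype.sum_prod_type, Finset.sum_mul_sum]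

private lemma aux_castAdd_inj :
    Function.Injective (Fin.castAdd m₂ : Fin m₁ → Fin (m₁ + m₂)) := by
  intro i j h
  exact Fin.ext (by simpa using congrArg Fin.val h)

private lemma aux_natAdd_inj :
    Function.Injective (Fin.natAdd m₁ : Fin m₂ → Fin (m₁ + m₂)) := by
  intro i j h
  have := congrArg Fin.val h
  simp only [Fin.coe_natAdd] at this
  exact Fin.ext (by omega)

private def auxEmb (A : Finset (Fin m₁)) (B : Finset (Fin m₂)) : Finset (Fin (m₁ + m₂)) :=
  A.map ⟨_, aux_castAdd_inj⟩ ∪ B.map ⟨_, aux_natAdd_inj⟩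

private lemma aux_mem_left (A : Finset (Fin m₁)) (B : Finset (Fin m₂)) (i : Fin m₁) :
    Fin.castAdd m₂ i ∈ auxEmb A B ↔ i ∈ A := by
  simp only [auxEmb, Finset.mem_union, Finset.mem_map, Function.Embedding.coeFn_mk]
  constructor
  · rintro (⟨a, ha, h⟩ | ⟨b, hb, h⟩)
    · rwa [← aux_castAdd_inj h]
    · have := congrArg Fin.val h
      simp only [Fin.coe_natAdd, Fin.coe_castAdd] at this
      omega
  · exact fun h => Or.inl ⟨i, h, rfl⟩

private lemma aux_mem_right (A : Finset (Fin m₁)) (B : Finset (Fin m₂)) (j : Fin m₂) :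
    Fin.natAdd m₁ j ∈ auxEmb A B ↔ j ∈ B := by
  simp only [auxEmb, Finset.mem_union, Finset.mem_map, Function.Embedding.coeFn_mk]
  constructor
  · rintro (⟨a, ha, h⟩ | ⟨b, hb, h⟩)
    · have := congrArg Fin.val h
      simp only [Fin.coe_natAdd, Fin.coe_castAdd] at this
      omega
    · rwa [← aux_natAdd_inj h]
  · exact fun h => Or.inr ⟨j, h, rfl⟩

private lemma aux_S1_emb (A : Finset (Fin m₁)) (B : Finset (Fin m₂)) :
    auxS1 (auxEmb A B) = A := by
  ext i; simp [auxS1, aux_mem_left]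

private lemma aux_S2_emb (A : Finset (Fin m₁)) (B : Finset (Fin m₂)) :
    auxS2 (auxEmb A B) = B := by
  ext j; simp [auxS2, aux_mem_right]

private lemma aux_card_emb (A : Finset (Fin m₁)) (B : Finset (Fin m₂)) :
    (auxEmb A B).card = A.card + B.card := by
  rw [auxEmb, Finset.card_union_of_disjoint, Finset.card_map, Finset.card_map]
  rw [Finset.disjoint_left]
  rintro x hx hx'
  simp only [Finset.mem_map, Function.Embedding.coeFn_mk] at hx hx'
  obtain ⟨a, -, rfl⟩ := hx
  obtain ⟨b, -, h⟩ := hx'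
  have := congrArg Fin.val h
  simp only [Fin.coe_natAdd, Fin.coe_castAdd] at this
  omega

private lemma aux_emb_bij :
    Function.Bijective (fun AB : Finset (Fin m₁) × Finset (Fin m₂) =>
      auxEmb AB.1 AB.2) := by
  constructor
  · intro ⟨A, B⟩ ⟨A', B'⟩ h
    simp only at h
    have h1 := congrArg auxS1 h
    have h2 := congrArg auxS2 h
    rw [aux_S1_emb, aux_S1_emb] at h1
    rw [aux_S2_emb, aux_S2_emb] at h2
    simp [h1, h2]
  · intro S
    refine ⟨(auxS1 S, auxS2 S), ?_⟩
    ext e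
    rcases aux_fin_cases e with ⟨i, rfl⟩ | ⟨j, rfl⟩
    · rw [aux_mem_left]; simp [auxS1]
    · rw [aux_mem_right]; simp [auxS2]

private lemma aux_main (p : ℝ) :
    ∑ x ∈ Finset.range (m₁ + m₂ + 1),
        (cG (auxE E₁ E₂) x : ℝ) * p ^ (m₁ + m₂ - x) * (1 - p) ^ x =
      (∑ x ∈ Finset.range (m₁ + 1), (cG E₁ x : ℝ) * p ^ (m₁ - x) * (1 - p) ^ x) *
        (∑ x ∈ Finset.range (m₂ + 1), (cG E₂ x : ℝ) * p ^ (m₂ - x) * (1 - p) ^ x) := by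
  classical
  rw [aux_poly, aux_poly, aux_poly, aux_prod_sum]
  refine (Fintype.sum_bijective _ aux_emb_bij _ _ ?_).symm
  rintro ⟨A, B⟩
  simp only
  rw [aux_card_emb]
  simp only [aux_dec_iff, aux_S1_emb, aux_S2_emb]
  have hA : A.card ≤ m₁ := by simpa using Finset.card_le_univ A
  have hB : B.card ≤ m₂ := by simpa using Finset.card_le_univ B
  have hexp : m₁ + m₂ - (A.card + B.card) = (m₁ - A.card) + (m₂ - B.card) := by omega
  by_cases h1 : DecodableMod E₁ A <;> by_cases h2 : DecodableMod E₂ B <;>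
    simp [h1, h2, hexp, pow_add] <;> ring

end AuxProof19

theorem stmt19 {V₁ V₂ : Type*} [Fintype V₁] [Fintype V₂] {m₁ m₂ : ℕ}
    (E₁ : Fin m₁ → Sym2 V₁) (E₂ : Fin m₂ → Sym2 V₂)
    (E : Fin (m₁ + m₂) → Sym2 (V₁ ⊕ V₂))
    (hE : E = fun e => Fin.addCases
      (fun i : Fin m₁ => Sym2.map Sum.inl (E₁ i))
      (fun j : Fin m₂ => Sym2.map Sum.inr (E₂ j)) e)
    (p : ℝ) :
    ∑ x ∈ Finset.range (m₁ + m₂ + 1),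
        (cG E x : ℝ) * p ^ (m₁ + m₂ - x) * (1 - p) ^ x =
      (∑ x ∈ Finset.range (m₁ + 1), (cG E₁ x : ℝ) * p ^ (m₁ - x) * (1 - p) ^ x) *
        (∑ x ∈ Finset.range (m₂ + 1), (cG E₂ x : ℝ) * p ^ (m₂ - x) * (1 - p) ^ x) := by
  subst hE
  exact aux_main E₁ E₂ p
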